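/- The assignment (M,φ,F) ↦ η(M,φ,F) is a tensor automorphism of the fibre functor ω̃ ⊗_{ℚ_p} K on the category of mixed Tate filtered φ-modules, i.e. it is functorial and satisfies η(M ⊗ M') = η(M) ⊗ η(M'). -/

import Mathlib

open scoped TensorProduct
open Function Module

namespace MT

variable (p : ℕ) (K0 K : Type) [Field K0] [Field K] [Algebra K0 K]

variable {M : Type} [AddCommGroup M] [Module K0 M]

/-- The slope-`n` part of a `φ`-module: the `K0`-span of the eigenvectors
`φ m = p^n • m` (which, for modules isomorphic to sums of `(K0, pⁿσ)`,
is exactly the isoclinic slope-`n` summand). -/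
def slopePart (φ : M → M) (n : ℤ) : Submodule K0 M :=
  Submodule.span K0 {m | φ m = (p : K0) ^ n • m}

/-- The sum `M_{≤ i}` of the slope pieces of slope at most `i`. -/
def slopeLE (φ : M → M) (i : ℤ) : Submodule K0 M :=
  ⨆ n : ℤ, ⨆ _ : n ≤ i, slopePart p K0 φ n

/-- The sum `M_{≥ i}` of the slope pieces of slope at least `i`. -/
def slopeGE (φ : M → M) (i : ℤ) : Submodule K0 M :=
  ⨆ n : ℤ, ⨆ _ : i ≤ n, slopePart p K0 φ n

/-- The (generalized) slope-`a/b` part of a `φ`-module. -/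
def slopePartQ (φ : M → M) (a : ℤ) (b : ℕ) : Submodule K0 M :=
  Submodule.span K0 {m | φ^[b] m = (p : K0) ^ a • m}

/-- `φ` is a `σ`-semilinear bijection. -/
structure IsSemilinear (σ : K0 →+* K0) (φ : M → M) : Prop where
  map_add : ∀ x y, φ (x + y) = φ x + φ y
  map_smul : ∀ (c : K0) (x : M), φ (c • x) = σ c • φ x
  bijective : Function.Bijective φ

/-- A mixed Tate filtered `φ`-module: condition (1) says that `(M, φ)` is a direct
sum of its integral slope parts (equivalently `(M,φ) ≅ ⊕ (K0, p^{n_i}σ)`), and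
condition (2) says that for each `i` the natural projection `F^i M_K → M_{≥ i} ⊗ K`
is an isomorphism, i.e. `F^i` is a complement of `M_{< i} ⊗ K` in `M_K`. -/
structure IsMixedTate (φ : M → M) (F : ℤ → Submodule K (K ⊗[K0] M)) : Prop where
  internal : DirectSum.IsInternal (fun n : ℤ => slopePart p K0 φ n)
  antitone : Antitone F
  compl : ∀ i : ℤ, IsCompl (F i) ((slopeLE p K0 φ (i - 1)).baseChange K)

/-- The Newton number of a `φ`-stable subspace (sum of slopes). -/
noncomputable def tN (φ : M → M) (M' : Submodule K0 M) : ℤ :=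
  ∑ᶠ n : ℤ, n * (Module.finrank K0 ↥(M' ⊓ slopePart p K0 φ n) : ℤ)

/-- The Hodge number of a subspace, for the induced filtration. -/
noncomputable def tH (F : ℤ → Submodule K (K ⊗[K0] M)) (M' : Submodule K0 M) : ℤ :=
  ∑ᶠ i : ℤ, i * ((Module.finrank K ↥(F i ⊓ M'.baseChange K) : ℤ) -
    (Module.finrank K ↥(F (i + 1) ⊓ M'.baseChange K) : ℤ))

/-- Weak admissibility: `t_H = t_N` on the whole module and `t_H ≤ t_N` on every
`φ`-stable and `N`-stable subspace (with the induced filtration). -/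
def WeaklyAdmissible (φ : M → M) (N : M →ₗ[K0] M)
    (F : ℤ → Submodule K (K ⊗[K0] M)) : Prop :=
  tH K0 K F ⊤ = tN p K0 φ ⊤ ∧
  ∀ M' : Submodule K0 M, (∀ m ∈ M', φ m ∈ M') → (∀ m ∈ M', N m ∈ M') →
    tH K0 K F M' ≤ tN p K0 φ M'

/-- The defining property of the automorphism `η` of `M_K` attached to a mixed Tate
filtered `φ`-module: on the slope-`i` part, `η x` is the unique element of `F^i M_K`
projecting to `x` along `M_{< i} ⊗ K`. -/
def IsEta (φ : M → M) (F : ℤ → Submodule K (K ⊗[K0] M))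
    (η : (K ⊗[K0] M) →ₗ[K] K ⊗[K0] M) : Prop :=
  ∀ i : ℤ, ∀ x ∈ (slopePart p K0 φ i).baseChange K,
    η x ∈ F i ∧ η x - x ∈ (slopeLE p K0 φ (i - 1)).baseChange K

section GenAux

lemma bc_ind {N : Submodule K0 M} {x : K ⊗[K0] M} (hx : x ∈ N.baseChange K)
    {P : K ⊗[K0] M → Prop} (h1 : ∀ m ∈ N, P ((1:K) ⊗ₜ[K0] m)) (h0 : P 0)
    (hadd : ∀ a b, P a → P b → P (a + b))
    (hsmul : ∀ (c : K) a, P a → P (c • a)) : P x := by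
  rw [Submodule.baseChange_eq_span] at hx
  refine Submodule.span_induction (p := fun x _ => P x) ?_ h0 (fun a b _ _ => hadd a b) (fun c a _ => hsmul c a) hx
  rintro z ⟨m, hm, rfl⟩
  exact h1 m hm

lemma bc_le {N : Submodule K0 M} {Q : Submodule K (K ⊗[K0] M)}
    (hQ : ∀ m ∈ N, (1:K) ⊗ₜ[K0] m ∈ Q) : N.baseChange K ≤ Q := fun x hx =>
  bc_ind K0 K hx hQ (zero_mem Q) (fun _ _ => add_mem) (fun c _ => Q.smul_mem c)

lemma bc_map {M' : Type} [AddCommGroup M'] [Module K0 M'] (f : M →ₗ[K0] M')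
    {N : Submodule K0 M} {N' : Submodule K0 M'} (h : ∀ m ∈ N, f m ∈ N') :
    ∀ x ∈ N.baseChange K, f.baseChange K x ∈ N'.baseChange K := by
  intro x hx
  refine bc_ind K0 K hx (P := fun x => f.baseChange K x ∈ N'.baseChange K) ?_ (by simp) ?_ ?_
  · intro m hm
    rw [LinearMap.baseChange_tmul]
    exact Submodule.tmul_mem_baseChange_of_mem _ (h m hm)
  · intro a b ha hb; rw [map_add]; exact add_mem ha hb
  · intro c a ha; rw [map_smul]; exact Submodule.smul_mem _ c ha

lemma bc_zero {M' : Type} [AddCommGroup M'] [Module K0 M'] (f : M →ₗ[K0] M')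
    {N : Submodule K0 M} (h : ∀ m ∈ N, f m = 0) :
    ∀ x ∈ N.baseChange K, f.baseChange K x = 0 := by
  intro x hx
  have := bc_map K0 K f (N' := ⊥) (fun m hm => by simp [h m hm]) x hx
  simpa using this

lemma span_tmul_mem {M' : Type} [AddCommGroup M'] [Module K0 M'] {s : Set M} {t : Set M'}
    {C : Submodule K0 (M ⊗[K0] M')} (h : ∀ m ∈ s, ∀ m' ∈ t, m ⊗ₜ[K0] m' ∈ C) :
    ∀ x ∈ Submodule.span K0 s, ∀ y ∈ Submodule.span K0 t, x ⊗ₜ[K0] y ∈ C := by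
  intro x hx
  refine Submodule.span_induction ?_ ?_ ?_ ?_ hx
  · intro m hm y hy
    refine Submodule.span_induction ?_ ?_ ?_ ?_ hy
    · exact fun m' hm' => h m hm m' hm'
    · simp
    · intro a b _ _ ha hb; rw [TensorProduct.tmul_add]; exact add_mem ha hb
    · intro c a _ ha; rw [TensorProduct.tmul_smul]; exact Submodule.smul_mem _ c ha
  · simp
  · intro a b _ _ ha hb y hy; rw [TensorProduct.add_tmul]; exact add_mem (ha y hy) (hb y hy)
  · intro c a _ ha y hy; rw [← TensorProduct.smul_tmul']; exact Submodule.smul_mem _ c (ha y hy)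

end GenAux

section TensorAux

variable {M' : Type} [AddCommGroup M'] [Module K0 M']

local notation "e" => TensorProduct.AlgebraTensorModule.distribBaseChange K0 K M M'

lemma esymm_tmul (c c' : K) (m : M) (m' : M') :
    (e).symm ((c ⊗ₜ[K0] m) ⊗ₜ[K] (c' ⊗ₜ[K0] m')) = (c' * c) ⊗ₜ[K0] (m ⊗ₜ[K0] m') := by
  simp [TensorProduct.AlgebraTensorModule.distribBaseChange, TensorProduct.smul_tmul']

lemma e_natural (f : M →ₗ[K0] M) (g : M' →ₗ[K0] M') (ξ : K ⊗[K0] M) (ζ : K ⊗[K0] M') :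
    (TensorProduct.map f g).baseChange K ((e).symm (ξ ⊗ₜ[K] ζ)) =
      (e).symm ((f.baseChange K ξ) ⊗ₜ[K] (g.baseChange K ζ)) := by
  induction ξ using TensorProduct.induction_on with
  | zero => simp
  | tmul c m =>
    induction ζ using TensorProduct.induction_on with
    | zero => simp
    | tmul c' m' => rw [esymm_tmul, LinearMap.baseChange_tmul, LinearMap.baseChange_tmul,
        LinearMap.baseChange_tmul, TensorProduct.map_tmul, esymm_tmul]
    | add z1 z2 h1 h2 =>
      rw [TensorProduct.tmul_add, map_add, map_add, h1, h2, map_add, TensorProduct.tmul_add,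
        map_add]
  | add z1 z2 h1 h2 =>
    rw [TensorProduct.add_tmul, map_add, map_add, h1, h2, map_add, TensorProduct.add_tmul,
      map_add]

lemma bc_tmul_mem {A : Submodule K0 M} {B : Submodule K0 M'} {C : Submodule K0 (M ⊗[K0] M')}
    (h : ∀ m ∈ A, ∀ m' ∈ B, m ⊗ₜ[K0] m' ∈ C) :
    ∀ x ∈ A.baseChange K, ∀ y ∈ B.baseChange K,
      (e).symm (x ⊗ₜ[K] y) ∈ C.baseChange K := by
  intro x hx
  refine bc_ind K0 K hx (P := fun x => ∀ y ∈ B.baseChange K, (e).symm (x ⊗ₜ[K] y) ∈ C.baseChange K) ?_ ?_ ?_ ?_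
  · intro m hm y hy
    refine bc_ind K0 K hy (P := fun y => (e).symm (((1:K) ⊗ₜ[K0] m) ⊗ₜ[K] y) ∈ C.baseChange K) ?_ ?_ ?_ ?_
    · intro m' hm'
      rw [esymm_tmul]
      exact Submodule.tmul_mem_baseChange_of_mem _ (h m hm m' hm')
    · (try dsimp only); rw [TensorProduct.tmul_zero, map_zero]; exact zero_mem _
    · intro a b ha hb; (try dsimp only); rw [TensorProduct.tmul_add, map_add]; exact add_mem ha hb
    · intro c a ha; (try dsimp only); rw [TensorProduct.tmul_smul, map_smul]
      exact Submodule.smul_mem _ c ha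
  · intro y hy; rw [TensorProduct.zero_tmul, map_zero]; exact zero_mem _
  · intro a b ha hb y hy
    (try dsimp only); rw [TensorProduct.add_tmul, map_add]; exact add_mem (ha y hy) (hb y hy)
  · intro c a ha y hy
    (try dsimp only); rw [← TensorProduct.smul_tmul', map_smul]
    exact Submodule.smul_mem _ c (ha y hy)

end TensorAux

section Aux

variable {σ : K0 →+* K0}

lemma mem_slopePart_of {φ : M → M} {n : ℤ} {m : M} (hm : φ m = (p : K0) ^ n • m) :
    m ∈ slopePart p K0 φ n := Submodule.subset_span hm

lemma slopePart_le_slopeLE (φ : M → M) {n i : ℤ} (h : n ≤ i) :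
    slopePart p K0 φ n ≤ slopeLE p K0 φ i :=
  le_iSup_of_le n (le_iSup_of_le h le_rfl)

lemma slopePart_le_slopeGE (φ : M → M) {n i : ℤ} (h : i ≤ n) :
    slopePart p K0 φ n ≤ slopeGE p K0 φ i :=
  le_iSup_of_le n (le_iSup_of_le h le_rfl)

lemma slopeLE_mono (φ : M → M) {i j : ℤ} (hij : i ≤ j) :
    slopeLE p K0 φ i ≤ slopeLE p K0 φ j :=
  iSup_le fun n => iSup_le fun hn => slopePart_le_slopeLE p K0 φ (hn.trans hij)

lemma slopeLE_ind {φ : M → M} {i : ℤ} {x : M} (hx : x ∈ slopeLE p K0 φ i) {C : M → Prop}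
    (hgen : ∀ n ≤ i, ∀ m, φ m = (p : K0) ^ n • m → C m) (h0 : C 0)
    (hadd : ∀ a b, C a → C b → C (a + b)) (hsmul : ∀ (c : K0) (a), C a → C (c • a)) :
    C x := by
  refine Submodule.iSup_induction _ (motive := C) hx ?_ h0 hadd
  intro n m hm
  by_cases hn : n ≤ i
  · rw [iSup_pos hn] at hm
    exact Submodule.span_induction (fun m hm => hgen n hn m hm) h0
      (fun a b _ _ => hadd a b) (fun c a _ => hsmul c a) hm
  · rw [iSup_neg hn] at hm
    have hm0 : m = 0 := by simpa using hm
    rw [hm0]; exact h0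

lemma slopeGE_ind {φ : M → M} {i : ℤ} {x : M} (hx : x ∈ slopeGE p K0 φ i) {C : M → Prop}
    (hgen : ∀ n, i ≤ n → ∀ m, φ m = (p : K0) ^ n • m → C m) (h0 : C 0)
    (hadd : ∀ a b, C a → C b → C (a + b)) (hsmul : ∀ (c : K0) (a), C a → C (c • a)) :
    C x := by
  refine Submodule.iSup_induction _ (motive := C) hx ?_ h0 hadd
  intro n m hm
  by_cases hn : i ≤ n
  · rw [iSup_pos hn] at hm
    exact Submodule.span_induction (fun m hm => hgen n hn m hm) h0
      (fun a b _ _ => hadd a b) (fun c a _ => hsmul c a) hm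
  · rw [iSup_neg hn] at hm
    have hm0 : m = 0 := by simpa using hm
    rw [hm0]; exact h0

lemma semilinear_zero {φ : M → M} (hφ : IsSemilinear K0 σ φ) : φ 0 = 0 := by
  have := hφ.map_add 0 0
  rw [add_zero] at this
  exact left_eq_add.1 this

lemma semilinear_sub {φ : M → M} (hφ : IsSemilinear K0 σ φ) (x y : M) :
    φ (x - y) = φ x - φ y := by
  have := hφ.map_add (x - y) y
  rw [sub_add_cancel] at this
  rw [this]; abel

lemma phi_pres_slopePart {φ : M → M} (hφ : IsSemilinear K0 σ φ) {c : ℤ} {x : M}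
    (hx : x ∈ slopePart p K0 φ c) : φ x ∈ slopePart p K0 φ c := by
  refine Submodule.span_induction ?_ ?_ ?_ ?_ hx
  · intro m hm
    rw [hm]
    exact Submodule.smul_mem _ _ (Submodule.subset_span hm)
  · simp [semilinear_zero K0 hφ]
  · intro a b _ _ ha hb; rw [hφ.map_add]; exact add_mem ha hb
  · intro c' a _ ha; rw [hφ.map_smul]; exact Submodule.smul_mem _ _ ha

/-- The projection onto the slope-`a` part coming from the internal direct sum
decomposition. -/
noncomputable def proj (φ : M → M)
    (hint : DirectSum.IsInternal fun n : ℤ => slopePart p K0 φ n) (a : ℤ) : M →ₗ[K0] M :=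
  (slopePart p K0 φ a).subtype ∘ₗ
    (DirectSum.component K0 ℤ (fun n => ↥(slopePart p K0 φ n)) a) ∘ₗ
    (LinearEquiv.ofBijective (DirectSum.coeLinearMap fun n : ℤ => slopePart p K0 φ n)
      hint).symm.toLinearMap

lemma proj_mem {φ : M → M} (hint : DirectSum.IsInternal fun n : ℤ => slopePart p K0 φ n)
    (a : ℤ) (x : M) : proj p K0 φ hint a x ∈ slopePart p K0 φ a :=
  Submodule.coe_mem _

lemma proj_eq_self {φ : M → M} (hint : DirectSum.IsInternal fun n : ℤ => slopePart p K0 φ n)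
    {a : ℤ} {x : M} (hx : x ∈ slopePart p K0 φ a) : proj p K0 φ hint a x = x := by
  have := hint.ofBijective_coeLinearMap_of_mem hx
  simp only [proj, LinearMap.coe_comp, Function.comp_apply, LinearEquiv.coe_coe]
  erw [this]
  rfl

lemma proj_eq_zero {φ : M → M} (hint : DirectSum.IsInternal fun n : ℤ => slopePart p K0 φ n)
    {a c : ℤ} {x : M} (hx : x ∈ slopePart p K0 φ c) (hca : c ≠ a) :
    proj p K0 φ hint a x = 0 := by
  have := hint.ofBijective_coeLinearMap_of_mem_ne hca hx
  simp only [proj, LinearMap.coe_comp, Function.comp_apply, LinearEquiv.coe_coe]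
  erw [this]
  rfl

lemma proj_decomp {φ : M → M} (hint : DirectSum.IsInternal fun n : ℤ => slopePart p K0 φ n)
    (x : M) : ∃ T : Finset ℤ, (∀ n ∉ T, proj p K0 φ hint n x = 0) ∧
      ∑ n ∈ T, proj p K0 φ hint n x = x := by
  set Ψ := LinearEquiv.ofBijective (DirectSum.coeLinearMap fun n : ℤ => slopePart p K0 φ n) hint
    with hΨ
  suffices H : ∀ y : DirectSum ℤ fun n : ℤ => ↥(slopePart p K0 φ n),
      ∃ T : Finset ℤ, (∀ n ∉ T, proj p K0 φ hint n (Ψ y) = 0) ∧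
        ∑ n ∈ T, proj p K0 φ hint n (Ψ y) = Ψ y by
    have := H (Ψ.symm x)
    rwa [Ψ.apply_symm_apply] at this
  intro y
  induction y using DirectSum.induction_on with
  | zero =>
    refine ⟨∅, fun n _ => ?_, ?_⟩
    · rw [Ψ.map_zero, map_zero]
    · rw [Ψ.map_zero, Finset.sum_empty]
  | of i z =>
    have hz : (Ψ (DirectSum.of (fun n : ℤ => ↥(slopePart p K0 φ n)) i z) : M) = (z : M) :=
      DirectSum.coeLinearMap_of _ i z
    refine ⟨{i}, fun n hn => ?_, ?_⟩
    · rw [hz]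
      exact proj_eq_zero p K0 hint z.2 (by simpa using (Ne.symm (by simpa using hn)))
    · rw [Finset.sum_singleton, hz]
      exact proj_eq_self p K0 hint z.2
  | add y1 y2 h1 h2 =>
    obtain ⟨T1, hv1, hs1⟩ := h1
    obtain ⟨T2, hv2, hs2⟩ := h2
    refine ⟨T1 ∪ T2, fun n hn => ?_, ?_⟩
    · rw [map_add, map_add]
      rw [hv1 n (fun hh => hn (Finset.mem_union_left _ hh)),
        hv2 n (fun hh => hn (Finset.mem_union_right _ hh)), add_zero]
    · rw [map_add]
      simp only [map_add]
      rw [Finset.sum_add_distrib]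
      rw [← Finset.sum_subset Finset.subset_union_left (fun n _ hn => hv1 n hn) (f := fun n => proj p K0 φ hint n (Ψ y1))]
      rw [← Finset.sum_subset Finset.subset_union_right (fun n _ hn => hv2 n hn) (f := fun n => proj p K0 φ hint n (Ψ y2))]
      rw [hs1, hs2]

lemma proj_sub_mem {φ : M → M} (hint : DirectSum.IsInternal fun n : ℤ => slopePart p K0 φ n)
    (a : ℤ) (x : M) :
    x - proj p K0 φ hint a x ∈ ⨆ c : ℤ, ⨆ _ : c ≠ a, slopePart p K0 φ c := by
  obtain ⟨T, hv, hs⟩ := proj_decomp p K0 hint x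
  by_cases ha : a ∈ T
  · have h2 : proj p K0 φ hint a x + ∑ n ∈ T.erase a, proj p K0 φ hint n x = x :=
      (Finset.add_sum_erase T (fun n => proj p K0 φ hint n x) ha).trans hs
    have h3 : x - proj p K0 φ hint a x = ∑ n ∈ T.erase a, proj p K0 φ hint n x := by
      rw [sub_eq_iff_eq_add, add_comm]; exact h2.symm
    rw [h3]
    refine Submodule.sum_mem _ fun n hn => ?_
    exact Submodule.mem_iSup_of_mem n
      (Submodule.mem_iSup_of_mem (Finset.ne_of_mem_erase hn) (proj_mem p K0 hint n x))
  · rw [hv a ha, sub_zero, ← hs]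
    refine Submodule.sum_mem _ fun n hn => ?_
    exact Submodule.mem_iSup_of_mem n
      (Submodule.mem_iSup_of_mem (fun hna => ha (by rwa [hna] at hn))
        (proj_mem p K0 hint n x))

lemma proj_unique {φ : M → M} (hint : DirectSum.IsInternal fun n : ℤ => slopePart p K0 φ n)
    {a : ℤ} {x y : M} (hy : y ∈ slopePart p K0 φ a)
    (hxy : x - y ∈ ⨆ c : ℤ, ⨆ _ : c ≠ a, slopePart p K0 φ c) :
    y = proj p K0 φ hint a x := by
  have hd1 : y - proj p K0 φ hint a x ∈ slopePart p K0 φ a :=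
    sub_mem hy (proj_mem p K0 hint a x)
  have hd2 : y - proj p K0 φ hint a x ∈ ⨆ c : ℤ, ⨆ _ : c ≠ a, slopePart p K0 φ c := by
    have : y - proj p K0 φ hint a x = (x - proj p K0 φ hint a x) - (x - y) := by abel
    rw [this]
    exact sub_mem (proj_sub_mem p K0 hint a x) hxy
  have h0 : y - proj p K0 φ hint a x = 0 :=
    Submodule.disjoint_def.mp (hint.submodule_iSupIndep a) _ hd1 hd2
  exact sub_eq_zero.mp h0

end Aux

section Aux2

variable {σ : K0 →+* K0}

lemma phi_pres_biSup {φ : M → M} (hφ : IsSemilinear K0 σ φ) {a : ℤ} {x : M}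
    (hx : x ∈ ⨆ c : ℤ, ⨆ _ : c ≠ a, slopePart p K0 φ c) :
    φ x ∈ ⨆ c : ℤ, ⨆ _ : c ≠ a, slopePart p K0 φ c := by
  refine Submodule.iSup_induction _ (motive := fun z => φ z ∈ _) hx ?_ ?_ ?_
  · intro c m hm
    by_cases hc : c ≠ a
    · rw [iSup_pos hc] at hm
      exact Submodule.mem_iSup_of_mem c
        (Submodule.mem_iSup_of_mem hc (phi_pres_slopePart p K0 hφ hm))
    · rw [iSup_neg hc] at hm
      have : m = 0 := by simpa using hm
      rw [this, semilinear_zero K0 hφ]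
      exact zero_mem _
  · show φ 0 ∈ _
    rw [semilinear_zero K0 hφ]; exact zero_mem _
  · intro a b ha hb
    show φ (a + b) ∈ _
    rw [hφ.map_add]; exact add_mem ha hb

lemma proj_comm {φ : M → M} (hφ : IsSemilinear K0 σ φ)
    (hint : DirectSum.IsInternal fun n : ℤ => slopePart p K0 φ n) (a : ℤ) (x : M) :
    proj p K0 φ hint a (φ x) = φ (proj p K0 φ hint a x) := by
  refine (proj_unique p K0 hint ?_ ?_).symm
  · exact phi_pres_slopePart p K0 hφ (proj_mem p K0 hint a x)
  · have : φ x - φ (proj p K0 φ hint a x) = φ (x - proj p K0 φ hint a x) :=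
      (semilinear_sub K0 hφ _ _).symm
    rw [this]
    exact phi_pres_biSup p K0 hφ (proj_sub_mem p K0 hint a x)

/-- Artin-style independence: a `p^n`-eigenvector of a `σ`-semilinear map lying in a span of
`p^m`-eigenvectors is zero, provided `σ t = p^d t` has no nonzero solution for `d ≠ 0`. -/
lemma eig_span_zero {V : Type} [AddCommGroup V] [Module K0 V] (hp : (p : K0) ≠ 0)
    (hns : ∀ d : ℤ, d ≠ 0 → ∀ t : K0, σ t = (p : K0) ^ d * t → t = 0)
    (ψ : V → V) (hadd : ∀ x y, ψ (x + y) = ψ x + ψ y)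
    (hsmul : ∀ (c : K0) (x), ψ (c • x) = σ c • ψ x)
    {W : Set V} {m n : ℤ} (hmn : m ≠ n) (hW : ∀ w ∈ W, ψ w = (p : K0) ^ m • w)
    {u : V} (hu : u ∈ Submodule.span K0 W) (heig : ψ u = (p : K0) ^ n • u) : u = 0 := by
  obtain ⟨k, f, g, hsum⟩ := Submodule.mem_span_set'.mp hu
  clear hu
  induction k generalizing u with
  | zero => rw [← hsum]; simp
  | succ k ih =>
    set ψh := AddMonoidHom.mk' ψ hadd with hψh
    have hψ_sum : ∀ (s : Finset (Fin (k+1))) (F : Fin (k+1) → V),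
        ψ (∑ i ∈ s, F i) = ∑ i ∈ s, ψ (F i) := fun s F => map_sum ψh F s
    by_cases hc0 : f 0 = 0
    · refine ih heig (fun i => f i.succ) (fun i => g i.succ) ?_
      rw [← hsum, Fin.sum_univ_succ, hc0, zero_smul, zero_add]
    · -- Artin step
      have hψu : ψ u = ∑ i : Fin (k+1), (σ (f i) * (p : K0) ^ m) • (g i : V) := by
        rw [← hsum, hψ_sum]
        refine Finset.sum_congr rfl fun i _ => ?_
        rw [hsmul, hW _ (g i).2, smul_smul]
      set μ := σ (f 0) * (f 0)⁻¹ * (p : K0) ^ m with hμ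
      by_cases hlam : (p : K0) ^ n - μ = 0
      · exfalso
        have hpm : ((p : K0) ^ m) ≠ 0 := zpow_ne_zero _ hp
        have h1 : (p : K0) ^ n = σ (f 0) * (f 0)⁻¹ * (p : K0) ^ m := by
          have := sub_eq_zero.mp hlam
          rwa [hμ] at this
        have key : σ (f 0) = (p : K0) ^ (n - m) * f 0 := by
          rw [zpow_sub₀ hp, h1]
          field_simp
        exact hc0 (hns (n - m) (sub_ne_zero.mpr (Ne.symm hmn)) _ key)
      · -- u is a multiple of an element with a k-term representation
        set u'' := ψ u - μ • u with hu''
        have h1 : u'' = ((p : K0) ^ n - μ) • u := by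
          rw [hu'', heig, sub_smul]
        have h2 : u'' = ∑ i : Fin k,
            ((σ (f i.succ) * (p : K0) ^ m - μ * f i.succ)) • (g i.succ : V) := by
          rw [hu'', hψu, ← hsum]
          rw [Finset.smul_sum, ← Finset.sum_sub_distrib, Fin.sum_univ_succ]
          have hzero : (σ (f 0) * (p : K0) ^ m) • (g 0 : V) - μ • (f 0 • (g 0 : V)) = 0 := by
            rw [smul_smul, ← sub_smul, hμ]
            field_simp
            simp
          rw [hzero, zero_add]
          refine Finset.sum_congr rfl fun i _ => ?_
          rw [smul_smul, ← sub_smul]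
        have hrep : ∑ i : Fin k,
            (((p : K0) ^ n - μ)⁻¹ * (σ (f i.succ) * (p : K0) ^ m - μ * f i.succ)) •
              (g i.succ : V) = u := by
          have : (((p : K0) ^ n - μ)⁻¹) • u'' = u := by
            rw [h1, smul_smul, inv_mul_cancel₀ hlam, one_smul]
          rw [← this, h2, Finset.smul_sum]
          refine Finset.sum_congr rfl fun i _ => ?_
          rw [smul_smul]
        exact ih heig (fun i => ((p : K0) ^ n - μ)⁻¹ *
          (σ (f i.succ) * (p : K0) ^ m - μ * f i.succ)) (fun i => g i.succ) hrep

end Aux2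

section Aux3

variable {σ : K0 →+* K0}

lemma bc_mono {N N' : Submodule K0 M} (h : N ≤ N') : N.baseChange K ≤ N'.baseChange K :=
  bc_le K0 K fun m hm => Submodule.tmul_mem_baseChange_of_mem 1 (h hm)

lemma noSol {φ : M → M} (hp : (p : K0) ≠ 0) (hφ : IsSemilinear K0 σ φ)
    (hint : DirectSum.IsInternal fun n : ℤ => slopePart p K0 φ n) (hM : Nontrivial M) :
    ∀ d : ℤ, d ≠ 0 → ∀ t : K0, σ t = (p : K0) ^ d * t → t = 0 := by
  intro d hd t ht
  by_contra hts
  obtain ⟨n, m, hm, hm0⟩ : ∃ (n : ℤ) (m : M), φ m = (p : K0) ^ n • m ∧ m ≠ 0 := by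
    by_contra hno
    push_neg at hno
    have hbot : ∀ n : ℤ, slopePart p K0 φ n = ⊥ := by
      intro n
      rw [slopePart, Submodule.span_eq_bot]
      intro m hm
      exact hno n m hm
    have hsup : (⊤ : Submodule K0 M) = ⊥ := by
      rw [← hint.submodule_iSup_eq_top]
      simp [hbot]
    obtain ⟨x, y, hxy⟩ := hM
    apply hxy
    have hx : x ∈ (⊥ : Submodule K0 M) := hsup ▸ Submodule.mem_top
    have hy : y ∈ (⊥ : Submodule K0 M) := hsup ▸ Submodule.mem_top
    rw [(Submodule.mem_bot K0).mp hx, (Submodule.mem_bot K0).mp hy]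
  have h1 : t • m ∈ slopePart p K0 φ (n + d) := by
    refine mem_slopePart_of p K0 ?_
    rw [hφ.map_smul, ht, hm, smul_smul, smul_smul, zpow_add₀ hp]
    congr 1
    ring
  have h2 : t • m ∈ ⨆ c : ℤ, ⨆ _ : c ≠ n + d, slopePart p K0 φ c :=
    Submodule.mem_iSup_of_mem n (Submodule.mem_iSup_of_mem (by omega)
      (Submodule.smul_mem _ t (mem_slopePart_of p K0 hm)))
  have h0 := Submodule.disjoint_def.mp (hint.submodule_iSupIndep (n + d)) _ h1 h2
  rcases smul_eq_zero.mp h0 with h | h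
  exacts [hts h, hm0 h]

lemma top_reach {φ : M → M} (hint : DirectSum.IsInternal fun n : ℤ => slopePart p K0 φ n)
    {Q : Submodule K (K ⊗[K0] M)} (hQ : ∀ n : ℤ, (slopePart p K0 φ n).baseChange K ≤ Q)
    (x : K ⊗[K0] M) : x ∈ Q := by
  have hx : x ∈ (⊤ : Submodule K0 M).baseChange K := by
    rw [Submodule.baseChange_top]; trivial
  refine bc_ind K0 K hx (P := fun x => x ∈ Q) ?_ (zero_mem Q) (fun a b ha hb => add_mem ha hb)
    (fun c a ha => Q.smul_mem c ha)
  intro m _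
  have hm : m ∈ ⨆ n : ℤ, slopePart p K0 φ n := by rw [hint.submodule_iSup_eq_top]; trivial
  refine Submodule.iSup_induction _ (motive := fun z => (1 : K) ⊗ₜ[K0] z ∈ Q) hm ?_ ?_ ?_
  · intro n z hz
    exact hQ n (Submodule.tmul_mem_baseChange_of_mem 1 hz)
  · show (1 : K) ⊗ₜ[K0] (0 : M) ∈ Q
    rw [TensorProduct.tmul_zero]; exact zero_mem Q
  · intro a b ha hb
    show (1 : K) ⊗ₜ[K0] (a + b) ∈ Q
    rw [TensorProduct.tmul_add]; exact add_mem ha hb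

lemma eta_unique {φ : M → M} {F : ℤ → Submodule K (K ⊗[K0] M)} (h : IsMixedTate p K0 K φ F)
    {i : ℤ} {u v : K ⊗[K0] M} (hu : u ∈ F i) (hv : v ∈ F i)
    (huv : u - v ∈ (slopeLE p K0 φ (i - 1)).baseChange K) : u = v :=
  sub_eq_zero.mp (Submodule.disjoint_def.mp (h.compl i).disjoint _ (sub_mem hu hv) huv)

lemma eta_GE_mem {φ : M → M} {F : ℤ → Submodule K (K ⊗[K0] M)}
    {η : (K ⊗[K0] M) →ₗ[K] K ⊗[K0] M} (h : IsMixedTate p K0 K φ F) (hη : IsEta p K0 K φ F η)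
    {a : ℤ} {x : K ⊗[K0] M} (hx : x ∈ (slopeGE p K0 φ a).baseChange K) : η x ∈ F a := by
  refine bc_ind K0 K hx (P := fun x => η x ∈ F a) ?_
    (by show η 0 ∈ F a; rw [map_zero]; exact zero_mem _)
    (fun u v hu hv => by show η (u + v) ∈ F a; rw [map_add]; exact add_mem hu hv)
    (fun c u hu => by show η (c • u) ∈ F a; rw [map_smul]; exact Submodule.smul_mem _ c hu)
  intro m hm
  refine slopeGE_ind p K0 hm (C := fun m => η ((1 : K) ⊗ₜ[K0] m) ∈ F a) ?_ ?_ ?_ ?_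
  · intro n hn m' hm'
    exact h.antitone hn (hη n ((1 : K) ⊗ₜ[K0] m')
      (Submodule.tmul_mem_baseChange_of_mem 1 (mem_slopePart_of p K0 hm'))).1
  · show η ((1 : K) ⊗ₜ[K0] (0 : M)) ∈ F a
    rw [TensorProduct.tmul_zero, map_zero]; exact zero_mem _
  · intro u v hu hv
    show η ((1 : K) ⊗ₜ[K0] (u + v)) ∈ F a
    rw [TensorProduct.tmul_add, map_add]; exact add_mem hu hv
  · intro c z hz
    show η ((1 : K) ⊗ₜ[K0] (c • z)) ∈ F a
    rw [TensorProduct.tmul_smul, ← algebraMap_smul K c, map_smul]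
    exact Submodule.smul_mem _ _ hz

lemma F_le_map_eta {φ : M → M} {F : ℤ → Submodule K (K ⊗[K0] M)}
    {η : (K ⊗[K0] M) →ₗ[K] K ⊗[K0] M} (h : IsMixedTate p K0 K φ F) (hη : IsEta p K0 K φ F η)
    (a : ℤ) : F a ≤ Submodule.map η ((slopeGE p K0 φ a).baseChange K) := by
  have main : ∀ k : ℕ, ∀ f ∈ F a, f ∈ (slopeLE p K0 φ (a - 1 + k)).baseChange K →
      f ∈ Submodule.map η ((slopeGE p K0 φ a).baseChange K) := by
    intro k
    induction k with
    | zero =>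
      intro f hf hfl
      have hf0 : f = 0 := by
        refine Submodule.disjoint_def.mp (h.compl a).disjoint f hf ?_
        simpa using hfl
      rw [hf0]
      exact ⟨0, zero_mem _, map_zero η⟩
    | succ k ih =>
      intro f hf hfl
      have hle : slopeLE p K0 φ (a - 1 + (k + 1 : ℕ)) ≤
          slopePart p K0 φ (a + k) ⊔ slopeLE p K0 φ (a - 1 + k) := by
        refine iSup_le fun n => iSup_le fun hn => ?_
        rcases eq_or_lt_of_le hn with rfl | hlt
        · exact le_sup_of_le_left (le_of_eq (by push_cast; ring_nf))
        · exact le_sup_of_le_right (slopePart_le_slopeLE p K0 φ (by push_cast at hlt ⊢; omega))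
      have hsplit : f ∈ (slopePart p K0 φ (a + k)).baseChange K ⊔
          (slopeLE p K0 φ (a - 1 + k)).baseChange K := by
        refine bc_le K0 K (N := slopeLE p K0 φ (a - 1 + (k + 1 : ℕ))) ?_ hfl
        intro m hm
        obtain ⟨m1, hm1, m2, hm2, rfl⟩ := Submodule.mem_sup.mp (hle hm)
        rw [TensorProduct.tmul_add]
        exact add_mem (Submodule.mem_sup_left (Submodule.tmul_mem_baseChange_of_mem 1 hm1))
          (Submodule.mem_sup_right (Submodule.tmul_mem_baseChange_of_mem 1 hm2))
      obtain ⟨u, hu, v, hv, huv⟩ := Submodule.mem_sup.mp hsplit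
      obtain ⟨he1, he2⟩ := hη (a + k) u hu
      have he2' : η u - u ∈ (slopeLE p K0 φ (a - 1 + k)).baseChange K := by
        have : a + k - 1 = a - 1 + k := by ring
        rwa [this] at he2
      have hfη : f - η u ∈ F a := sub_mem hf (h.antitone (by omega) he1)
      have hfη2 : f - η u ∈ (slopeLE p K0 φ (a - 1 + k)).baseChange K := by
        have : f - η u = v - (η u - u) := by rw [← huv]; abel
        rw [this]
        exact sub_mem hv he2'
      obtain ⟨g, hg, hg2⟩ := ih (f - η u) hfη hfη2
      refine ⟨g + u, add_mem hg ?_, ?_⟩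
      · exact bc_mono K0 K (slopePart_le_slopeGE p K0 φ (by omega)) hu
      · rw [map_add, hg2]; abel
  intro f hf
  have hdir : Directed (· ≤ ·) fun k : ℕ => (slopeLE p K0 φ (a - 1 + k)).baseChange K := by
    refine Monotone.directed_le fun k l hkl => bc_mono K0 K (slopeLE_mono p K0 φ (by omega))
  have hmem : f ∈ ⨆ k : ℕ, (slopeLE p K0 φ (a - 1 + k)).baseChange K := by
    refine top_reach p K0 K h.internal (fun n => ?_) f
    refine le_iSup_of_le (n - (a - 1)).toNat (bc_mono K0 K ?_)
    exact slopePart_le_slopeLE p K0 φ (by omega)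
  obtain ⟨k, hk⟩ := (Submodule.mem_iSup_of_directed _ hdir).mp hmem
  exact main k f hf hk

lemma map_slopePart {M' : Type} [AddCommGroup M'] [Module K0 M'] {φ : M → M} {φ' : M' → M'}
    (f : M →ₗ[K0] M') (hf : ∀ m, f (φ m) = φ' (f m)) (n : ℤ) :
    ∀ m ∈ slopePart p K0 φ n, f m ∈ slopePart p K0 φ' n := by
  intro m hm
  refine Submodule.span_induction ?_ (by show f 0 ∈ _; rw [map_zero]; exact zero_mem _)
    (fun u v _ _ hu hv => by show f (u + v) ∈ _; rw [map_add]; exact add_mem hu hv)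
    (fun c u _ hu => by show f (c • u) ∈ _; rw [map_smul]; exact Submodule.smul_mem _ c hu) hm
  intro m' hm'
  refine mem_slopePart_of p K0 ?_
  rw [← hf, hm', map_smul]

lemma map_slopeLE {M' : Type} [AddCommGroup M'] [Module K0 M'] {φ : M → M} {φ' : M' → M'}
    (f : M →ₗ[K0] M') (hf : ∀ m, f (φ m) = φ' (f m)) (i : ℤ) :
    ∀ m ∈ slopeLE p K0 φ i, f m ∈ slopeLE p K0 φ' i := by
  intro m hm
  refine slopeLE_ind p K0 hm (C := fun m => f m ∈ slopeLE p K0 φ' i) ?_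
    (by show f 0 ∈ _; rw [map_zero]; exact zero_mem _)
    (fun u v hu hv => by show f (u + v) ∈ _; rw [map_add]; exact add_mem hu hv)
    (fun c u hu => by show f (c • u) ∈ _; rw [map_smul]; exact Submodule.smul_mem _ c hu)
  intro n hn m' hm'
  exact slopePart_le_slopeLE p K0 φ' hn
    (map_slopePart p K0 f hf n m' (mem_slopePart_of p K0 hm'))

end Aux3

section Tensor

variable {σ : K0 →+* K0}
variable {M' : Type} [AddCommGroup M'] [Module K0 M']

local notation "e" => TensorProduct.AlgebraTensorModule.distribBaseChange K0 K M M'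

/-- The bigraded piece of a tensor product of slope decompositions. -/
def piece (φ : M → M) (φ' : M' → M') (a b : ℤ) : Submodule K0 (M ⊗[K0] M') :=
  Submodule.span K0 {z | ∃ m, φ m = (p : K0) ^ a • m ∧
    ∃ m', φ' m' = (p : K0) ^ b • m' ∧ z = m ⊗ₜ[K0] m'}

variable {φ : M → M} {φ' : M' → M'} {φT : M ⊗[K0] M' → M ⊗[K0] M'}

lemma eig_tmul (hp : (p : K0) ≠ 0)
    (hφT_tmul : ∀ (m : M) (m' : M'), φT (m ⊗ₜ[K0] m') = φ m ⊗ₜ[K0] φ' m')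
    {a b : ℤ} {m : M} {m' : M'} (hm : φ m = (p : K0) ^ a • m)
    (hm' : φ' m' = (p : K0) ^ b • m') :
    φT (m ⊗ₜ[K0] m') = (p : K0) ^ (a + b) • (m ⊗ₜ[K0] m') := by
  rw [hφT_tmul, hm, hm', ← TensorProduct.smul_tmul', TensorProduct.tmul_smul, smul_smul,
    ← zpow_add₀ hp]

lemma piece_le_slopePartT (hp : (p : K0) ≠ 0)
    (hφT_tmul : ∀ (m : M) (m' : M'), φT (m ⊗ₜ[K0] m') = φ m ⊗ₜ[K0] φ' m') (a b : ℤ) :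
    piece p K0 φ φ' a b ≤ slopePart p K0 φT (a + b) := by
  rw [piece]
  refine Submodule.span_le.mpr ?_
  rintro z ⟨m, hm, m', hm', rfl⟩
  exact mem_slopePart_of p K0 (eig_tmul p K0 hp hφT_tmul hm hm')

lemma tmul_mem_piece {a b : ℤ} {x : M} {y : M'} (hx : x ∈ slopePart p K0 φ a)
    (hy : y ∈ slopePart p K0 φ' b) : x ⊗ₜ[K0] y ∈ piece p K0 φ φ' a b := by
  refine span_tmul_mem K0 (C := piece p K0 φ φ' a b) ?_ x hx y hy
  intro m hm m' hm'
  exact Submodule.subset_span ⟨m, hm, m', hm', rfl⟩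

lemma bc_part_tmul (hp : (p : K0) ≠ 0)
    (hφT_tmul : ∀ (m : M) (m' : M'), φT (m ⊗ₜ[K0] m') = φ m ⊗ₜ[K0] φ' m') {a b : ℤ}
    {x : K ⊗[K0] M} {y : K ⊗[K0] M'} (hx : x ∈ (slopePart p K0 φ a).baseChange K)
    (hy : y ∈ (slopePart p K0 φ' b).baseChange K) :
    (e).symm (x ⊗ₜ[K] y) ∈ (slopePart p K0 φT (a + b)).baseChange K := by
  refine bc_tmul_mem K0 K ?_ x hx y hy
  intro m hm m' hm'
  exact piece_le_slopePartT p K0 hp hφT_tmul a b (tmul_mem_piece p K0 hm hm')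

lemma slopeLE_tmul (hp : (p : K0) ≠ 0)
    (hφT_tmul : ∀ (m : M) (m' : M'), φT (m ⊗ₜ[K0] m') = φ m ⊗ₜ[K0] φ' m') {c d k : ℤ}
    (hk : c + d ≤ k) :
    ∀ x ∈ slopeLE p K0 φ c, ∀ y ∈ slopeLE p K0 φ' d, x ⊗ₜ[K0] y ∈ slopeLE p K0 φT k := by
  intro x hx
  refine slopeLE_ind p K0 hx
    (C := fun x => ∀ y ∈ slopeLE p K0 φ' d, x ⊗ₜ[K0] y ∈ slopeLE p K0 φT k) ?_ ?_ ?_ ?_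
  · intro n hn m hm y hy
    refine slopeLE_ind p K0 hy (C := fun y => m ⊗ₜ[K0] y ∈ slopeLE p K0 φT k) ?_ ?_ ?_ ?_
    · intro n' hn' m' hm'
      refine slopePart_le_slopeLE p K0 φT (show n + n' ≤ k by omega) ?_
      exact mem_slopePart_of p K0 (eig_tmul p K0 hp hφT_tmul hm hm')
    · show m ⊗ₜ[K0] (0 : M') ∈ _
      rw [TensorProduct.tmul_zero]; exact zero_mem _
    · intro u v hu hv
      show m ⊗ₜ[K0] (u + v) ∈ _
      rw [TensorProduct.tmul_add]; exact add_mem hu hv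
    · intro cc u hu
      show m ⊗ₜ[K0] (cc • u) ∈ _
      rw [TensorProduct.tmul_smul]; exact Submodule.smul_mem _ cc hu
  · intro y hy; rw [TensorProduct.zero_tmul]; exact zero_mem _
  · intro u v hu hv y hy; rw [TensorProduct.add_tmul]; exact add_mem (hu y hy) (hv y hy)
  · intro cc u hu y hy; rw [← TensorProduct.smul_tmul']; exact Submodule.smul_mem _ cc (hu y hy)

lemma bc_LE_tmul (hp : (p : K0) ≠ 0)
    (hφT_tmul : ∀ (m : M) (m' : M'), φT (m ⊗ₜ[K0] m') = φ m ⊗ₜ[K0] φ' m') {c d k : ℤ}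
    (hk : c + d ≤ k) {x : K ⊗[K0] M} {y : K ⊗[K0] M'}
    (hx : x ∈ (slopeLE p K0 φ c).baseChange K) (hy : y ∈ (slopeLE p K0 φ' d).baseChange K) :
    (e).symm (x ⊗ₜ[K] y) ∈ (slopeLE p K0 φT k).baseChange K :=
  bc_tmul_mem K0 K (fun m hm m' hm' => slopeLE_tmul p K0 hp hφT_tmul hk m hm m' hm') x hx y hy

lemma proj_kills_LE (hint : DirectSum.IsInternal fun n : ℤ => slopePart p K0 φ n)
    {a i : ℤ} (hai : i < a) : ∀ z ∈ slopeLE p K0 φ i, proj p K0 φ hint a z = 0 := by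
  intro z hz
  refine slopeLE_ind p K0 hz (C := fun z => proj p K0 φ hint a z = 0) ?_ (map_zero _) ?_ ?_
  · intro n hn m hm
    exact proj_eq_zero p K0 hint (mem_slopePart_of p K0 hm) (by omega)
  · intro u v hu hv; rw [map_add, hu, hv, add_zero]
  · intro c u hu; rw [map_smul, hu, smul_zero]

lemma proj_kills_GE (hint : DirectSum.IsInternal fun n : ℤ => slopePart p K0 φ n)
    {a i : ℤ} (hai : a < i) : ∀ z ∈ slopeGE p K0 φ i, proj p K0 φ hint a z = 0 := by
  intro z hz
  refine slopeGE_ind p K0 hz (C := fun z => proj p K0 φ hint a z = 0) ?_ (map_zero _) ?_ ?_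
  · intro n hn m hm
    exact proj_eq_zero p K0 hint (mem_slopePart_of p K0 hm) (by omega)
  · intro u v hu hv; rw [map_add, hu, hv, add_zero]
  · intro c u hu; rw [map_smul, hu, smul_zero]

lemma Pi_mem (hint : DirectSum.IsInternal fun n : ℤ => slopePart p K0 φ n)
    (hint' : DirectSum.IsInternal fun n : ℤ => slopePart p K0 φ' n) (a b : ℤ)
    (z : M ⊗[K0] M') :
    TensorProduct.map (proj p K0 φ hint a) (proj p K0 φ' hint' b) z ∈ piece p K0 φ φ' a b := by
  induction z using TensorProduct.induction_on with
  | zero => rw [map_zero]; exact zero_mem _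
  | tmul m m' =>
    rw [TensorProduct.map_tmul]
    exact span_tmul_mem K0 (C := piece p K0 φ φ' a b)
      (fun u hu u' hu' => Submodule.subset_span ⟨u, hu, u', hu', rfl⟩) _
      (proj_mem p K0 hint a m) _ (proj_mem p K0 hint' b m')
  | add u v hu hv => rw [map_add]; exact add_mem hu hv

lemma PiT_comm (hφ : IsSemilinear K0 σ φ) (hφ' : IsSemilinear K0 σ φ')
    (hφT : IsSemilinear K0 σ φT)
    (hφT_tmul : ∀ (m : M) (m' : M'), φT (m ⊗ₜ[K0] m') = φ m ⊗ₜ[K0] φ' m')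
    (hint : DirectSum.IsInternal fun n : ℤ => slopePart p K0 φ n)
    (hint' : DirectSum.IsInternal fun n : ℤ => slopePart p K0 φ' n) (a b : ℤ)
    (z : M ⊗[K0] M') :
    TensorProduct.map (proj p K0 φ hint a) (proj p K0 φ' hint' b) (φT z) =
      φT (TensorProduct.map (proj p K0 φ hint a) (proj p K0 φ' hint' b) z) := by
  induction z using TensorProduct.induction_on with
  | zero => simp [semilinear_zero K0 hφT]
  | tmul m m' =>
    rw [hφT_tmul, TensorProduct.map_tmul, TensorProduct.map_tmul, hφT_tmul,
      proj_comm p K0 hφ hint a m, proj_comm p K0 hφ' hint' b m']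
  | add u v hu hv => rw [hφT.map_add, map_add, hu, hv, map_add, hφT.map_add]

lemma eig_component_zero (hp : (p : K0) ≠ 0)
    (hns : ∀ d : ℤ, d ≠ 0 → ∀ t : K0, σ t = (p : K0) ^ d * t → t = 0)
    (hφ : IsSemilinear K0 σ φ) (hφ' : IsSemilinear K0 σ φ')
    (hφT : IsSemilinear K0 σ φT)
    (hφT_tmul : ∀ (m : M) (m' : M'), φT (m ⊗ₜ[K0] m') = φ m ⊗ₜ[K0] φ' m')
    (hint : DirectSum.IsInternal fun n : ℤ => slopePart p K0 φ n)
    (hint' : DirectSum.IsInternal fun n : ℤ => slopePart p K0 φ' n)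
    {n a b : ℤ} (hab : a + b ≠ n) {v : M ⊗[K0] M'} (hv : φT v = (p : K0) ^ n • v) :
    TensorProduct.map (proj p K0 φ hint a) (proj p K0 φ' hint' b) v = 0 := by
  set u := TensorProduct.map (proj p K0 φ hint a) (proj p K0 φ' hint' b) v with hu
  have h1 : φT u = (p : K0) ^ n • u := by
    rw [hu, ← PiT_comm p K0 hφ hφ' hφT hφT_tmul hint hint', hv, map_smul]
  refine eig_span_zero p K0 hp hns φT hφT.map_add hφT.map_smul
    (W := {z | ∃ m, φ m = (p : K0) ^ a • m ∧ ∃ m', φ' m' = (p : K0) ^ b • m' ∧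
      z = m ⊗ₜ[K0] m'}) (m := a + b) hab ?_ (Pi_mem p K0 hint hint' a b v) h1
  rintro w ⟨m, hm, m', hm', rfl⟩
  exact eig_tmul p K0 hp hφT_tmul hm hm'

lemma LE_component_zero (hp : (p : K0) ≠ 0)
    (hns : ∀ d : ℤ, d ≠ 0 → ∀ t : K0, σ t = (p : K0) ^ d * t → t = 0)
    (hφ : IsSemilinear K0 σ φ) (hφ' : IsSemilinear K0 σ φ')
    (hφT : IsSemilinear K0 σ φT)
    (hφT_tmul : ∀ (m : M) (m' : M'), φT (m ⊗ₜ[K0] m') = φ m ⊗ₜ[K0] φ' m')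
    (hint : DirectSum.IsInternal fun n : ℤ => slopePart p K0 φ n)
    (hint' : DirectSum.IsInternal fun n : ℤ => slopePart p K0 φ' n)
    {i a b : ℤ} (hab : i ≤ a + b) {δ : K ⊗[K0] (M ⊗[K0] M')}
    (hδ : δ ∈ (slopeLE p K0 φT (i - 1)).baseChange K) :
    (TensorProduct.map (proj p K0 φ hint a) (proj p K0 φ' hint' b)).baseChange K δ = 0 := by
  refine bc_zero K0 K _ ?_ δ hδ
  intro z hz
  refine slopeLE_ind p K0 hz
    (C := fun z => TensorProduct.map (proj p K0 φ hint a) (proj p K0 φ' hint' b) z = 0) ?_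
    (map_zero _) ?_ ?_
  · intro n hn m hm
    exact eig_component_zero p K0 hp hns hφ hφ' hφT hφT_tmul hint hint' (by omega) hm
  · intro u v hu hv; rw [map_add, hu, hv, add_zero]
  · intro c u hu; rw [map_smul, hu, smul_zero]

lemma Pi_decomp0 (hint : DirectSum.IsInternal fun n : ℤ => slopePart p K0 φ n)
    (hint' : DirectSum.IsInternal fun n : ℤ => slopePart p K0 φ' n) (z : M ⊗[K0] M') :
    ∃ T : Finset (ℤ × ℤ),
      (∀ q ∉ T, TensorProduct.map (proj p K0 φ hint q.1) (proj p K0 φ' hint' q.2) z = 0) ∧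
      ∑ q ∈ T, TensorProduct.map (proj p K0 φ hint q.1) (proj p K0 φ' hint' q.2) z = z := by
  induction z using TensorProduct.induction_on with
  | zero => exact ⟨∅, fun q _ => map_zero _, by rw [Finset.sum_empty]⟩
  | tmul m m' =>
    obtain ⟨T1, hv1, hs1⟩ := proj_decomp p K0 hint m
    obtain ⟨T2, hv2, hs2⟩ := proj_decomp p K0 hint' m'
    refine ⟨T1 ×ˢ T2, fun q hq => ?_, ?_⟩
    · rw [TensorProduct.map_tmul]
      have hq' : q.1 ∉ T1 ∨ q.2 ∉ T2 := by
        by_contra hc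
        push_neg at hc
        exact hq (Finset.mem_product.mpr ⟨hc.1, hc.2⟩)
      rcases hq' with h | h
      · rw [hv1 _ h, TensorProduct.zero_tmul]
      · rw [hv2 _ h, TensorProduct.tmul_zero]
    · rw [Finset.sum_product]
      have h1 : ∀ a ∈ T1, ∑ b ∈ T2, TensorProduct.map (proj p K0 φ hint ((a, b) : ℤ × ℤ).1)
          (proj p K0 φ' hint' ((a, b) : ℤ × ℤ).2) (m ⊗ₜ[K0] m') =
          (proj p K0 φ hint a m) ⊗ₜ[K0] m' := by
        intro a _
        have h2 : ∀ b ∈ T2, TensorProduct.map (proj p K0 φ hint ((a, b) : ℤ × ℤ).1)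
            (proj p K0 φ' hint' ((a, b) : ℤ × ℤ).2) (m ⊗ₜ[K0] m') =
            (proj p K0 φ hint a m) ⊗ₜ[K0] (proj p K0 φ' hint' b m') := fun b _ => by
          rw [TensorProduct.map_tmul]
        rw [Finset.sum_congr rfl h2, ← TensorProduct.tmul_sum, hs2]
      rw [Finset.sum_congr rfl h1, ← TensorProduct.sum_tmul, hs1]
  | add u v hu hv =>
    obtain ⟨T1, hv1, hs1⟩ := hu
    obtain ⟨T2, hv2, hs2⟩ := hv
    refine ⟨T1 ∪ T2, fun q hq => ?_, ?_⟩
    · rw [map_add, hv1 q (fun hh => hq (Finset.mem_union_left _ hh)),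
        hv2 q (fun hh => hq (Finset.mem_union_right _ hh)), add_zero]
    · simp only [map_add]
      rw [Finset.sum_add_distrib]
      have e1 := Finset.sum_subset (Finset.subset_union_left (s₂ := T2))
        (fun q (_ : q ∈ T1 ∪ T2) hq => hv1 q hq)
      have e2 := Finset.sum_subset (Finset.subset_union_right (s₁ := T1))
        (fun q (_ : q ∈ T1 ∪ T2) hq => hv2 q hq)
      rw [← e1, ← e2, hs1, hs2]

lemma PiK_decomp (hint : DirectSum.IsInternal fun n : ℤ => slopePart p K0 φ n)
    (hint' : DirectSum.IsInternal fun n : ℤ => slopePart p K0 φ' n)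
    (w : K ⊗[K0] (M ⊗[K0] M')) :
    ∃ T : Finset (ℤ × ℤ),
      (∀ q ∉ T, (TensorProduct.map (proj p K0 φ hint q.1)
        (proj p K0 φ' hint' q.2)).baseChange K w = 0) ∧
      ∑ q ∈ T, (TensorProduct.map (proj p K0 φ hint q.1)
        (proj p K0 φ' hint' q.2)).baseChange K w = w := by
  induction w using TensorProduct.induction_on with
  | zero => exact ⟨∅, fun q _ => map_zero _, by rw [Finset.sum_empty]⟩
  | tmul c z =>
    obtain ⟨T, hv, hs⟩ := Pi_decomp0 p K0 hint hint' z
    refine ⟨T, fun q hq => ?_, ?_⟩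
    · rw [LinearMap.baseChange_tmul, hv q hq, TensorProduct.tmul_zero]
    · have : ∀ q ∈ T, (TensorProduct.map (proj p K0 φ hint q.1)
          (proj p K0 φ' hint' q.2)).baseChange K (c ⊗ₜ[K0] z) =
          c ⊗ₜ[K0] (TensorProduct.map (proj p K0 φ hint q.1) (proj p K0 φ' hint' q.2) z) :=
        fun q _ => by rw [LinearMap.baseChange_tmul]
      rw [Finset.sum_congr rfl this, ← TensorProduct.tmul_sum, hs]
  | add u v hu hv =>
    obtain ⟨T1, hv1, hs1⟩ := hu
    obtain ⟨T2, hv2, hs2⟩ := hv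
    refine ⟨T1 ∪ T2, fun q hq => ?_, ?_⟩
    · rw [map_add, hv1 q (fun hh => hq (Finset.mem_union_left _ hh)),
        hv2 q (fun hh => hq (Finset.mem_union_right _ hh)), add_zero]
    · simp only [map_add]
      rw [Finset.sum_add_distrib]
      have e1 := Finset.sum_subset (Finset.subset_union_left (s₂ := T2))
        (fun q (_ : q ∈ T1 ∪ T2) hq => hv1 q hq)
      have e2 := Finset.sum_subset (Finset.subset_union_right (s₁ := T1))
        (fun q (_ : q ∈ T1 ∪ T2) hq => hv2 q hq)
      rw [← e1, ← e2, hs1, hs2]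

end Tensor

section Tensor2

variable {σ : K0 →+* K0}
variable {M' : Type} [AddCommGroup M'] [Module K0 M']

local notation "e" => TensorProduct.AlgebraTensorModule.distribBaseChange K0 K M M'

variable {φ : M → M} {φ' : M' → M'} {φT : M ⊗[K0] M' → M ⊗[K0] M'}
variable {F : ℤ → Submodule K (K ⊗[K0] M)} {F' : ℤ → Submodule K (K ⊗[K0] M')}

/-- The conjugate of `η ⊗ η'` under the canonical identification. -/
noncomputable def Hmap (η : (K ⊗[K0] M) →ₗ[K] K ⊗[K0] M)
    (η' : (K ⊗[K0] M') →ₗ[K] K ⊗[K0] M') :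
    (K ⊗[K0] (M ⊗[K0] M')) →ₗ[K] K ⊗[K0] (M ⊗[K0] M') :=
  (e).symm.toLinearMap ∘ₗ (TensorProduct.map η η') ∘ₗ (e).toLinearMap

lemma Hmap_apply (η : (K ⊗[K0] M) →ₗ[K] K ⊗[K0] M) (η' : (K ⊗[K0] M') →ₗ[K] K ⊗[K0] M')
    (u : K ⊗[K0] M) (v : K ⊗[K0] M') :
    Hmap K0 K η η' ((e).symm (u ⊗ₜ[K] v)) = (e).symm (η u ⊗ₜ[K] η' v) := by
  simp only [Hmap, LinearMap.coe_comp, Function.comp_apply, LinearEquiv.coe_coe,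
    LinearEquiv.apply_symm_apply, TensorProduct.map_tmul]

lemma e_one_tmul (m : M) (m' : M') :
    (e) ((1 : K) ⊗ₜ[K0] (m ⊗ₜ[K0] m')) = ((1 : K) ⊗ₜ[K0] m) ⊗ₜ[K] ((1 : K) ⊗ₜ[K0] m') := by
  have h1 := esymm_tmul K0 K (1 : K) (1 : K) m m'
  rw [one_mul] at h1
  rw [← h1, LinearEquiv.apply_symm_apply]

lemma projK_eta_self (hint : DirectSum.IsInternal fun n : ℤ => slopePart p K0 φ n)
    {η : (K ⊗[K0] M) →ₗ[K] K ⊗[K0] M} (hη : IsEta p K0 K φ F η) {c : ℤ} {m : M}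
    (hm : φ m = (p : K0) ^ c • m) :
    (proj p K0 φ hint c).baseChange K (η ((1 : K) ⊗ₜ[K0] m)) = (1 : K) ⊗ₜ[K0] m := by
  have hsplit : η ((1 : K) ⊗ₜ[K0] m) =
      (1 : K) ⊗ₜ[K0] m + (η ((1 : K) ⊗ₜ[K0] m) - (1 : K) ⊗ₜ[K0] m) := by abel
  have h2 := (hη c ((1 : K) ⊗ₜ[K0] m)
    (Submodule.tmul_mem_baseChange_of_mem 1 (mem_slopePart_of p K0 hm))).2
  rw [hsplit, map_add,
    bc_zero K0 K _ (proj_kills_LE p K0 hint (show c - 1 < c by omega)) _ h2,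
    LinearMap.baseChange_tmul, proj_eq_self p K0 hint (mem_slopePart_of p K0 hm), add_zero]

lemma projK_eta_high (hint : DirectSum.IsInternal fun n : ℤ => slopePart p K0 φ n)
    {η : (K ⊗[K0] M) →ₗ[K] K ⊗[K0] M} (hη : IsEta p K0 K φ F η) {a c : ℤ} {m : M}
    (hm : φ m = (p : K0) ^ c • m) (hac : c < a) :
    (proj p K0 φ hint a).baseChange K (η ((1 : K) ⊗ₜ[K0] m)) = 0 := by
  have hsplit : η ((1 : K) ⊗ₜ[K0] m) =
      (1 : K) ⊗ₜ[K0] m + (η ((1 : K) ⊗ₜ[K0] m) - (1 : K) ⊗ₜ[K0] m) := by abel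
  have h2 := (hη c ((1 : K) ⊗ₜ[K0] m)
    (Submodule.tmul_mem_baseChange_of_mem 1 (mem_slopePart_of p K0 hm))).2
  rw [hsplit, map_add,
    bc_zero K0 K _ (proj_kills_LE p K0 hint (show c - 1 < a by omega)) _ h2,
    LinearMap.baseChange_tmul, proj_eq_zero p K0 hint (mem_slopePart_of p K0 hm) (by omega),
    TensorProduct.tmul_zero, add_zero]

lemma PiK_mem (hint : DirectSum.IsInternal fun n : ℤ => slopePart p K0 φ n)
    (hint' : DirectSum.IsInternal fun n : ℤ => slopePart p K0 φ' n) (a b : ℤ)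
    (w : K ⊗[K0] (M ⊗[K0] M')) :
    (TensorProduct.map (proj p K0 φ hint a) (proj p K0 φ' hint' b)).baseChange K w ∈
      (piece p K0 φ φ' a b).baseChange K := by
  have hw : w ∈ (⊤ : Submodule K0 (M ⊗[K0] M')).baseChange K := by
    rw [Submodule.baseChange_top]; trivial
  exact bc_map K0 K _ (fun z _ => Pi_mem p K0 hint hint' a b z) w hw

lemma PiK_H_piece (hint : DirectSum.IsInternal fun n : ℤ => slopePart p K0 φ n)
    (hint' : DirectSum.IsInternal fun n : ℤ => slopePart p K0 φ' n)
    {η : (K ⊗[K0] M) →ₗ[K] K ⊗[K0] M} (hη : IsEta p K0 K φ F η)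
    {η' : (K ⊗[K0] M') →ₗ[K] K ⊗[K0] M'} (hη' : IsEta p K0 K φ' F' η')
    {a b c d : ℤ} {v : K ⊗[K0] (M ⊗[K0] M')} (hv : v ∈ (piece p K0 φ φ' c d).baseChange K) :
    ((a = c ∧ b = d) →
      (TensorProduct.map (proj p K0 φ hint a) (proj p K0 φ' hint' b)).baseChange K
        (Hmap K0 K η η' v) = v) ∧
    ((c < a ∨ d < b) →
      (TensorProduct.map (proj p K0 φ hint a) (proj p K0 φ' hint' b)).baseChange K
        (Hmap K0 K η η' v) = 0) := by
  set Pab := (TensorProduct.map (proj p K0 φ hint a) (proj p K0 φ' hint' b)).baseChange K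
    with hPab
  refine bc_ind K0 K hv (P := fun v => ((a = c ∧ b = d) → Pab (Hmap K0 K η η' v) = v) ∧
    ((c < a ∨ d < b) → Pab (Hmap K0 K η η' v) = 0)) ?_ ?_ ?_ ?_
  · intro z hz
    refine Submodule.span_induction ?_ ?_ ?_ ?_ hz
    · rintro w ⟨m, hm, m', hm', rfl⟩
      have hH : Hmap K0 K η η' ((1 : K) ⊗ₜ[K0] (m ⊗ₜ[K0] m')) =
          (e).symm (η ((1 : K) ⊗ₜ[K0] m) ⊗ₜ[K] η' ((1 : K) ⊗ₜ[K0] m')) := by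
        have h0 : (1 : K) ⊗ₜ[K0] (m ⊗ₜ[K0] m') =
            (e).symm (((1 : K) ⊗ₜ[K0] m) ⊗ₜ[K] ((1 : K) ⊗ₜ[K0] m')) := by
          rw [esymm_tmul, one_mul]
        rw [h0, Hmap_apply]
      constructor
      · rintro ⟨rfl, rfl⟩
        rw [hH, hPab, e_natural, projK_eta_self p K0 K hint hη hm,
          projK_eta_self p K0 K hint' hη' hm', esymm_tmul, one_mul]
      · rintro (hca | hdb)
        · rw [hH, hPab, e_natural, projK_eta_high p K0 K hint hη hm hca,
            TensorProduct.zero_tmul, map_zero]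
        · rw [hH, hPab, e_natural, projK_eta_high p K0 K hint' hη' hm' hdb,
            TensorProduct.tmul_zero, map_zero]
    · constructor
      · intro _; rw [TensorProduct.tmul_zero, map_zero, map_zero]
      · intro _; rw [TensorProduct.tmul_zero, map_zero, map_zero]
    · rintro z1 z2 _ _ ⟨ha1, hb1⟩ ⟨ha2, hb2⟩
      constructor
      · intro hh
        rw [TensorProduct.tmul_add, map_add, map_add, ha1 hh, ha2 hh]
      · intro hh
        rw [TensorProduct.tmul_add, map_add, map_add, hb1 hh, hb2 hh, add_zero]
    · rintro cc z _ ⟨ha1, hb1⟩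
      constructor
      · intro hh
        rw [TensorProduct.tmul_smul, ← algebraMap_smul K cc, map_smul, map_smul, ha1 hh]
      · intro hh
        rw [TensorProduct.tmul_smul, ← algebraMap_smul K cc, map_smul, map_smul, hb1 hh,
          smul_zero]
  · constructor
    · intro _; rw [map_zero, map_zero]
    · intro _; rw [map_zero, map_zero]
  · rintro z1 z2 ⟨ha1, hb1⟩ ⟨ha2, hb2⟩
    constructor
    · intro hh; rw [map_add, map_add, ha1 hh, ha2 hh]
    · intro hh; rw [map_add, map_add, hb1 hh, hb2 hh, add_zero]
  · rintro cc z ⟨ha1, hb1⟩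
    constructor
    · intro hh; rw [map_smul, map_smul, ha1 hh]
    · intro hh; rw [map_smul, map_smul, hb1 hh, smul_zero]

end Tensor2

section Tensor3

variable {σ : K0 →+* K0}
variable {M' : Type} [AddCommGroup M'] [Module K0 M']

local notation "e" => TensorProduct.AlgebraTensorModule.distribBaseChange K0 K M M'

variable {φ : M → M} {φ' : M' → M'} {φT : M ⊗[K0] M' → M ⊗[K0] M'}
variable {F : ℤ → Submodule K (K ⊗[K0] M)} {F' : ℤ → Submodule K (K ⊗[K0] M')}

lemma FT_disjoint (hp : (p : K0) ≠ 0)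
    (hns : ∀ d : ℤ, d ≠ 0 → ∀ t : K0, σ t = (p : K0) ^ d * t → t = 0)
    (hφ : IsSemilinear K0 σ φ) (hφ' : IsSemilinear K0 σ φ')
    (hφT : IsSemilinear K0 σ φT)
    (hφT_tmul : ∀ (m : M) (m' : M'), φT (m ⊗ₜ[K0] m') = φ m ⊗ₜ[K0] φ' m')
    (h : IsMixedTate p K0 K φ F) (h' : IsMixedTate p K0 K φ' F')
    {η : (K ⊗[K0] M) →ₗ[K] K ⊗[K0] M} (hη : IsEta p K0 K φ F η)
    {η' : (K ⊗[K0] M') →ₗ[K] K ⊗[K0] M'} (hη' : IsEta p K0 K φ' F' η')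
    {FT : ℤ → Submodule K (K ⊗[K0] (M ⊗[K0] M'))}
    (hFT : ∀ i : ℤ, FT i = ⨆ a : ℤ, Submodule.span K
      {z | ∃ x ∈ F a, ∃ y ∈ F' (i - a), z = (e).symm (x ⊗ₜ[K] y)})
    (i : ℤ) {δ : K ⊗[K0] (M ⊗[K0] M')} (hδ1 : δ ∈ FT i)
    (hδ2 : δ ∈ (slopeLE p K0 φT (i - 1)).baseChange K) : δ = 0 := by
  classical
  set hint := h.internal
  set hint' := h'.internal
  set Pi : ℤ → ℤ → (K ⊗[K0] (M ⊗[K0] M')) →ₗ[K] K ⊗[K0] (M ⊗[K0] M') := fun a b =>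
    (TensorProduct.map (proj p K0 φ hint a) (proj p K0 φ' hint' b)).baseChange K with hPi
  set GT : Submodule K (K ⊗[K0] (M ⊗[K0] M')) := ⨆ a : ℤ, Submodule.span K
    {z | ∃ u ∈ (slopeGE p K0 φ a).baseChange K,
      ∃ v ∈ (slopeGE p K0 φ' (i - a)).baseChange K, z = (e).symm (u ⊗ₜ[K] v)} with hGT
  -- `FT i` is contained in the image of `GT` under `Hmap`
  have hFTle : FT i ≤ Submodule.map (Hmap K0 K η η') GT := by
    rw [hFT i]
    refine iSup_le fun a => Submodule.span_le.mpr ?_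
    rintro z ⟨x, hx, y, hy, rfl⟩
    obtain ⟨u, hu, hux⟩ := F_le_map_eta p K0 K h hη a hx
    obtain ⟨v, hv, hvy⟩ := F_le_map_eta p K0 K h' hη' (i - a) hy
    refine ⟨(e).symm (u ⊗ₜ[K] v), ?_, ?_⟩
    · exact Submodule.mem_iSup_of_mem a (Submodule.subset_span ⟨u, hu, v, hv, rfl⟩)
    · rw [Hmap_apply, hux, hvy]
  obtain ⟨w, hw, rfl⟩ := hFTle hδ1
  -- components of elements of `GT` vanish in low total degrees
  have hGTcomp : ∀ a b : ℤ, a + b < i → Pi a b w = 0 := by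
    intro a b hab
    have hker : GT ≤ LinearMap.ker (Pi a b) := by
      rw [hGT]
      refine iSup_le fun a' => Submodule.span_le.mpr ?_
      rintro z ⟨u, hu, v, hv, rfl⟩
      rw [SetLike.mem_coe, LinearMap.mem_ker, hPi]
      rw [e_natural]
      by_cases haa : a < a'
      · rw [bc_zero K0 K _ (proj_kills_GE p K0 hint haa) u hu, TensorProduct.zero_tmul,
          map_zero]
      · have hbb : b < i - a' := by omega
        rw [bc_zero K0 K _ (proj_kills_GE p K0 hint' hbb) v hv, TensorProduct.tmul_zero,
          map_zero]
    exact hker hw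
  obtain ⟨T, hvan, hsum⟩ := PiK_decomp p K0 K hint hint' w
  set T' := T.filter (fun q : ℤ × ℤ => Pi q.1 q.2 w ≠ 0) with hT'def
  rcases Finset.eq_empty_or_nonempty T' with hT' | hT'
  · have hw0 : w = 0 := by
      rw [← hsum]
      refine Finset.sum_eq_zero fun q hq => ?_
      by_contra hne
      have hmem : q ∈ T' := Finset.mem_filter.mpr ⟨hq, hne⟩
      rw [hT'] at hmem
      exact absurd hmem (Finset.notMem_empty q)
    rw [hw0, map_zero]
  · exfalso
    set a0 := (T'.image Prod.fst).max' (hT'.image _) with ha0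
    set B := T'.filter (fun q : ℤ × ℤ => q.1 = a0) with hB
    have hBne : B.Nonempty := by
      obtain ⟨q, hq, hq1⟩ := Finset.mem_image.mp ((T'.image Prod.fst).max'_mem (hT'.image _))
      exact ⟨q, Finset.mem_filter.mpr ⟨hq, hq1⟩⟩
    set b0 := (B.image Prod.snd).max' (hBne.image _) with hb0
    obtain ⟨q0, hq0B, hq0b⟩ := Finset.mem_image.mp ((B.image Prod.snd).max'_mem (hBne.image _))
    have hq0a : q0.1 = a0 := (Finset.mem_filter.mp hq0B).2
    have hq0T' : q0 ∈ T' := (Finset.mem_filter.mp hq0B).1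
    have hq0 : q0 = (a0, b0) := Prod.ext hq0a hq0b
    rw [hq0] at hq0T'
    have hne0 : Pi a0 b0 w ≠ 0 := (Finset.mem_filter.mp hq0T').2
    have hmemT : ((a0, b0) : ℤ × ℤ) ∈ T := (Finset.mem_filter.mp hq0T').1
    have hhigh : i ≤ a0 + b0 := by
      by_contra hlow
      push_neg at hlow
      exact hne0 (hGTcomp a0 b0 hlow)
    have hmax : ∀ q ∈ T, q ≠ ((a0, b0) : ℤ × ℤ) → a0 ≤ q.1 → b0 ≤ q.2 → Pi q.1 q.2 w = 0 := by
      intro q hq hne ha hb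
      by_contra hqz
      have hqT' : q ∈ T' := Finset.mem_filter.mpr ⟨hq, hqz⟩
      have h1 : q.1 ≤ a0 := Finset.le_max' _ _ (Finset.mem_image_of_mem _ hqT')
      have hq1 : q.1 = a0 := le_antisymm h1 ha
      have hqB : q ∈ B := Finset.mem_filter.mpr ⟨hqT', hq1⟩
      have h2 : q.2 ≤ b0 := Finset.le_max' _ _ (Finset.mem_image_of_mem _ hqB)
      exact hne (Prod.ext hq1 (le_antisymm h2 hb))
    have hcomp : Pi a0 b0 (Hmap K0 K η η' w) = Pi a0 b0 w := by
      conv_lhs => rw [← hsum]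
      rw [map_sum, map_sum]
      rw [Finset.sum_eq_single_of_mem ((a0, b0) : ℤ × ℤ) hmemT ?_]
      · exact (PiK_H_piece p K0 K hint hint' hη hη'
          (PiK_mem p K0 K hint hint' a0 b0 w)).1 ⟨rfl, rfl⟩
      · intro q hq hne
        by_cases hcase : a0 ≤ q.1 ∧ b0 ≤ q.2
        · rw [hmax q hq hne hcase.1 hcase.2, map_zero, map_zero]
        · have hcase' : q.1 < a0 ∨ q.2 < b0 := by omega
          exact (PiK_H_piece p K0 K hint hint' hη hη'
            (PiK_mem p K0 K hint hint' q.1 q.2 w)).2 hcase'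
    have hzero : Pi a0 b0 (Hmap K0 K η η' w) = 0 := by
      rw [hPi]
      exact LE_component_zero p K0 K hp hns hφ hφ' hφT hφT_tmul hint hint' hhigh hδ2
    exact hne0 (by rw [← hcomp, hzero])

lemma subsingleton_tensor_left {A B : Type} [AddCommGroup A] [Module K0 A] [AddCommGroup B]
    [Module K0 B] (h : Subsingleton A) : Subsingleton (A ⊗[K0] B) := by
  have hz : ∀ z : A ⊗[K0] B, z = 0 := by
    intro z
    induction z using TensorProduct.induction_on with
    | zero => rfl
    | tmul a b => rw [Subsingleton.elim a 0, TensorProduct.zero_tmul]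
    | add u v hu hv => rw [hu, hv, add_zero]
  exact ⟨fun x y => by rw [hz x, hz y]⟩

lemma subsingleton_tensor_right {A B : Type} [AddCommGroup A] [Module K0 A] [AddCommGroup B]
    [Module K0 B] (h : Subsingleton B) : Subsingleton (A ⊗[K0] B) := by
  have hz : ∀ z : A ⊗[K0] B, z = 0 := by
    intro z
    induction z using TensorProduct.induction_on with
    | zero => rfl
    | tmul a b => rw [Subsingleton.elim b 0, TensorProduct.tmul_zero]
    | add u v hu hv => rw [hu, hv, add_zero]
  exact ⟨fun x y => by rw [hz x, hz y]⟩

end Tensor3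

/-- The automorphisms `η(M,φ,F)` define a tensor automorphism of
the fibre functor `ω̃ ⊗_{ℚ_p} K` (identified with `M ↦ M_K`): they are functorial
(commute with base-changed morphisms of mixed Tate filtered `φ`-modules), and for
the tensor product object `(M ⊗ M', φ ⊗ φ', F'')`, with the usual tensor product
filtration `F''` under the canonical identification
`K ⊗ (M ⊗ M') ≅ (K ⊗ M) ⊗_K (K ⊗ M')`, one has `η(M ⊗ M') = η(M) ⊗ η(M')`. -/
theorem eta_tensor_automorphism
    {M' : Type} [AddCommGroup M'] [Module K0 M']
    (σ : K0 →+* K0) (hσp : σ (p : K0) = (p : K0)) (hp : (p : K0) ≠ 0)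
    (φ : M → M) (F : ℤ → Submodule K (K ⊗[K0] M))
    (φ' : M' → M') (F' : ℤ → Submodule K (K ⊗[K0] M'))
    (hφ : IsSemilinear K0 σ φ) (hφ' : IsSemilinear K0 σ φ')
    (h : IsMixedTate p K0 K φ F) (h' : IsMixedTate p K0 K φ' F')
    (η : (K ⊗[K0] M) →ₗ[K] K ⊗[K0] M) (hη : IsEta p K0 K φ F η)
    (η' : (K ⊗[K0] M') →ₗ[K] K ⊗[K0] M') (hη' : IsEta p K0 K φ' F' η') :
    -- functoriality: `η` commutes with (the base change of) any morphism
    (∀ (f : M →ₗ[K0] M'),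
      (∀ m, f (φ m) = φ' (f m)) →
      (∀ i, Submodule.map (f.baseChange K) (F i) ≤ F' i) →
      ∀ x, η' (f.baseChange K x) = f.baseChange K (η x)) ∧
    -- compatibility with the tensor product: `η(M ⊗ M') = η(M) ⊗ η(M')`
    (∀ (φT : M ⊗[K0] M' → M ⊗[K0] M')
       (FT : ℤ → Submodule K (K ⊗[K0] (M ⊗[K0] M'))),
      IsSemilinear K0 σ φT →
      (∀ (m : M) (m' : M'), φT (m ⊗ₜ[K0] m') = φ m ⊗ₜ[K0] φ' m') →
      (∀ i : ℤ, FT i = ⨆ a : ℤ, Submodule.span K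
        {z | ∃ x ∈ F a, ∃ y ∈ F' (i - a), z =
          (TensorProduct.AlgebraTensorModule.distribBaseChange K0 K M M').symm
            (x ⊗ₜ[K] y)}) →
      ∀ ηT : (K ⊗[K0] (M ⊗[K0] M')) →ₗ[K] K ⊗[K0] (M ⊗[K0] M'),
        IsEta p K0 K φT FT ηT →
        ∀ (x : K ⊗[K0] M) (y : K ⊗[K0] M'),
          ηT ((TensorProduct.AlgebraTensorModule.distribBaseChange K0 K M M').symm
              (x ⊗ₜ[K] y)) =
            (TensorProduct.AlgebraTensorModule.distribBaseChange K0 K M M').symm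
              (η x ⊗ₜ[K] η' y)) := by
  constructor
  · -- Part 1: functoriality
    intro f hfφ hfF x
    have key : ∀ i : ℤ, (slopePart p K0 φ i).baseChange K ≤
        LinearMap.eqLocus (η' ∘ₗ f.baseChange K) (f.baseChange K ∘ₗ η) := by
      intro i z hz
      have hzf : f.baseChange K z ∈ (slopePart p K0 φ' i).baseChange K :=
        bc_map K0 K f (map_slopePart p K0 f hfφ i) z hz
      obtain ⟨h1, h2⟩ := hη i z hz
      obtain ⟨h1', h2'⟩ := hη' i _ hzf
      refine LinearMap.mem_eqLocus.mpr ?_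
      show η' (f.baseChange K z) = f.baseChange K (η z)
      refine eta_unique p K0 K h' h1' (hfF i ⟨η z, h1, rfl⟩) ?_
      have h3 : f.baseChange K (η z) - f.baseChange K z ∈
          (slopeLE p K0 φ' (i - 1)).baseChange K := by
        rw [← map_sub]
        exact bc_map K0 K f (map_slopeLE p K0 f hfφ (i - 1)) _ h2
      have h4 : η' (f.baseChange K z) - f.baseChange K (η z) =
          (η' (f.baseChange K z) - f.baseChange K z) -
            (f.baseChange K (η z) - f.baseChange K z) := by abel
      rw [h4]
      exact sub_mem h2' h3
    have hx := top_reach p K0 K h.internal key x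
    simpa using LinearMap.mem_eqLocus.mp hx
  · -- Part 2: compatibility with tensor products
    intro φT FT hφT hφT_tmul hFT ηT hηT x y
    rcases subsingleton_or_nontrivial (K ⊗[K0] (M ⊗[K0] M')) with hss | hnt
    · exact Subsingleton.elim _ _
    have hM : Nontrivial M := by
      by_contra hM
      rw [not_nontrivial_iff_subsingleton] at hM
      exact absurd (subsingleton_tensor_right K0 (B := M ⊗[K0] M') (A := K)
        (subsingleton_tensor_left K0 hM)) (not_subsingleton _)
    have hns := noSol p K0 hp hφ h.internal hM
    have core : ∀ a : ℤ, ∀ u ∈ (slopePart p K0 φ a).baseChange K, ∀ b : ℤ,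
        ∀ v ∈ (slopePart p K0 φ' b).baseChange K,
        ηT ((TensorProduct.AlgebraTensorModule.distribBaseChange K0 K M M').symm (u ⊗ₜ[K] v)) =
          (TensorProduct.AlgebraTensorModule.distribBaseChange K0 K M M').symm
            (η u ⊗ₜ[K] η' v) := by
      intro a u hu b v hv
      have hz : (TensorProduct.AlgebraTensorModule.distribBaseChange K0 K M M').symm
          (u ⊗ₜ[K] v) ∈ (slopePart p K0 φT (a + b)).baseChange K :=
        bc_part_tmul p K0 K hp hφT_tmul hu hv
      obtain ⟨hT1, hT2⟩ := hηT (a + b) _ hz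
      obtain ⟨h1, h2⟩ := hη a u hu
      obtain ⟨h1', h2'⟩ := hη' b v hv
      have hw : (TensorProduct.AlgebraTensorModule.distribBaseChange K0 K M M').symm
          (η u ⊗ₜ[K] η' v) ∈ FT (a + b) := by
        rw [hFT (a + b)]
        refine Submodule.mem_iSup_of_mem a (Submodule.subset_span ?_)
        refine ⟨η u, h1, η' v, ?_, rfl⟩
        rw [show a + b - a = b by ring]
        exact h1'
      have hdiff : (TensorProduct.AlgebraTensorModule.distribBaseChange K0 K M M').symm
          (η u ⊗ₜ[K] η' v) -
          (TensorProduct.AlgebraTensorModule.distribBaseChange K0 K M M').symm (u ⊗ₜ[K] v) ∈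
          (slopeLE p K0 φT (a + b - 1)).baseChange K := by
        have hexp : η u ⊗ₜ[K] η' v - u ⊗ₜ[K] v =
            (η u - u) ⊗ₜ[K] η' v + u ⊗ₜ[K] (η' v - v) := by
          rw [TensorProduct.sub_tmul, TensorProduct.tmul_sub]
          abel
        rw [← map_sub, hexp, map_add]
        refine add_mem ?_ ?_
        · have hη'v : η' v ∈ (slopeLE p K0 φ' b).baseChange K := by
            have hv' : η' v = (η' v - v) + v := by abel
            rw [hv']
            exact add_mem (bc_mono K0 K (slopeLE_mono p K0 φ' (by omega)) h2')
              (bc_mono K0 K (slopePart_le_slopeLE p K0 φ' le_rfl) hv)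
          exact bc_LE_tmul p K0 K hp hφT_tmul (show a - 1 + b ≤ a + b - 1 by omega) h2 hη'v
        · have hu' : u ∈ (slopeLE p K0 φ a).baseChange K :=
            bc_mono K0 K (slopePart_le_slopeLE p K0 φ le_rfl) hu
          exact bc_LE_tmul p K0 K hp hφT_tmul (show a + (b - 1) ≤ a + b - 1 by omega) hu' h2'
      refine sub_eq_zero.mp (FT_disjoint p K0 K hp hns hφ hφ' hφT hφT_tmul h h' hη hη' hFT
        (a + b) (sub_mem hT1 hw) ?_)
      have h5 : ηT ((TensorProduct.AlgebraTensorModule.distribBaseChange K0 K M M').symm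
            (u ⊗ₜ[K] v)) -
          (TensorProduct.AlgebraTensorModule.distribBaseChange K0 K M M').symm
            (η u ⊗ₜ[K] η' v) =
          (ηT ((TensorProduct.AlgebraTensorModule.distribBaseChange K0 K M M').symm
            (u ⊗ₜ[K] v)) -
            (TensorProduct.AlgebraTensorModule.distribBaseChange K0 K M M').symm
              (u ⊗ₜ[K] v)) -
          ((TensorProduct.AlgebraTensorModule.distribBaseChange K0 K M M').symm
            (η u ⊗ₜ[K] η' v) -
            (TensorProduct.AlgebraTensorModule.distribBaseChange K0 K M M').symm
              (u ⊗ₜ[K] v)) := by abel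
      rw [h5]
      exact sub_mem hT2 hdiff
    have step1 : ∀ a : ℤ, ∀ u ∈ (slopePart p K0 φ a).baseChange K, ∀ y' : K ⊗[K0] M',
        ηT ((TensorProduct.AlgebraTensorModule.distribBaseChange K0 K M M').symm
          (u ⊗ₜ[K] y')) =
        (TensorProduct.AlgebraTensorModule.distribBaseChange K0 K M M').symm
          (η u ⊗ₜ[K] η' y') := by
      intro a u hu y'
      have hkey : ∀ b : ℤ, (slopePart p K0 φ' b).baseChange K ≤
          LinearMap.eqLocus
            (ηT ∘ₗ ((TensorProduct.AlgebraTensorModule.distribBaseChange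
                K0 K M M').symm.toLinearMap ∘ₗ
              TensorProduct.mk K (K ⊗[K0] M) (K ⊗[K0] M') u))
            ((TensorProduct.AlgebraTensorModule.distribBaseChange
                K0 K M M').symm.toLinearMap ∘ₗ
              (TensorProduct.mk K (K ⊗[K0] M) (K ⊗[K0] M') (η u)) ∘ₗ η') := by
        intro b v hv
        refine LinearMap.mem_eqLocus.mpr ?_
        show ηT ((TensorProduct.AlgebraTensorModule.distribBaseChange K0 K M M').symm
            (u ⊗ₜ[K] v)) =
          (TensorProduct.AlgebraTensorModule.distribBaseChange K0 K M M').symm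
            (η u ⊗ₜ[K] η' v)
        exact core a u hu b v hv
      have hy := top_reach p K0 K h'.internal hkey y'
      simpa using LinearMap.mem_eqLocus.mp hy
    have step2 : ∀ a : ℤ, (slopePart p K0 φ a).baseChange K ≤
        LinearMap.eqLocus
          (ηT ∘ₗ ((TensorProduct.AlgebraTensorModule.distribBaseChange
              K0 K M M').symm.toLinearMap ∘ₗ
            (TensorProduct.mk K (K ⊗[K0] M) (K ⊗[K0] M')).flip y))
          ((TensorProduct.AlgebraTensorModule.distribBaseChange
              K0 K M M').symm.toLinearMap ∘ₗ
            ((TensorProduct.mk K (K ⊗[K0] M) (K ⊗[K0] M')).flip (η' y)) ∘ₗ η) := by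
      intro a u hu
      refine LinearMap.mem_eqLocus.mpr ?_
      show ηT ((TensorProduct.AlgebraTensorModule.distribBaseChange K0 K M M').symm
          (u ⊗ₜ[K] y)) =
        (TensorProduct.AlgebraTensorModule.distribBaseChange K0 K M M').symm
          (η u ⊗ₜ[K] η' y)
      exact step1 a u hu y
    have hx := top_reach p K0 K h.internal step2 x
    simpa using LinearMap.mem_eqLocus.mp hx


end MT
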